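/- Regret bound for the specialist (sleeping-experts) exponentially weighted rule: under convex bounded losses, for all experts j, the regret R_T(S_η, j) = Σ_{t=1}^T (ℓ_t(p_t) - ℓ_t(δ_j)) 𝟙{j ∈ E_t} satisfies R_T(S_η, j) ≤ (ln N)/η + (η/8) L² T. -/

import Mathlib

lemma vquarter (v : ℝ) : v * (1 - v) ≤ 1/4 := by nlinarith [sq_nonneg (v - 1/2)]

lemma gpos {t : ℝ} (ht0 : 0 ≤ t) (ht1 : t ≤ 1) (u : ℝ) :
    0 < 1 - t + t * Real.exp u := by
  rcases lt_or_eq_of_le ht1 with h | h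
  · have h1 : 0 < 1 - t := by linarith
    have h2 : 0 ≤ t * Real.exp u := mul_nonneg ht0 (Real.exp_pos u).le
    linarith
  · subst h
    have : 1 - 1 + 1 * Real.exp u = Real.exp u := by ring
    rw [this]; positivity

lemma hoeff_one {t : ℝ} (ht0 : 0 ≤ t) (ht1 : t ≤ 1) (u : ℝ) :
    Real.log (1 - t + t * Real.exp u) ≤ t * u + u ^ 2 / 8 := by
  set g : ℝ → ℝ := fun u => 1 - t + t * Real.exp u with hg_def
  have hg : ∀ u, 0 < g u := fun u => gpos ht0 ht1 u
  have hgd : ∀ u, HasDerivAt g (t * Real.exp u) u := by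
    intro u
    exact ((Real.hasDerivAt_exp u).const_mul t).const_add (1 - t)
  set φ : ℝ → ℝ := fun u => t * u + u ^ 2 / 8 - Real.log (g u) with hφ_def
  set φ' : ℝ → ℝ := fun u => t + u / 4 - t * Real.exp u / g u with hφ'_def
  have hφd : ∀ u, HasDerivAt φ (φ' u) u := by
    intro u
    have h1 : HasDerivAt (fun u : ℝ => t * u + u ^ 2 / 8) (t + u / 4) u := by
      have := ((hasDerivAt_id u).const_mul t).add ((hasDerivAt_pow 2 u).div_const 8)
      exact this.congr_deriv (by ring)
    have h2 : HasDerivAt (fun u => Real.log (g u)) (t * Real.exp u / g u) u :=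
      (hgd u).log (hg u).ne'
    exact h1.sub h2
  have hφ'd : ∀ u, HasDerivAt φ'
      (1/4 - (t * Real.exp u / g u) * (1 - t * Real.exp u / g u)) u := by
    intro u
    have h1 : HasDerivAt (fun u : ℝ => t + u / 4) (1/4) u := by
      simpa using ((hasDerivAt_id u).div_const 4).const_add t
    have h2 : HasDerivAt (fun u => t * Real.exp u / g u)
        ((t * Real.exp u * g u - t * Real.exp u * (t * Real.exp u)) / (g u) ^ 2) u := by
      have hn : HasDerivAt (fun u => t * Real.exp u) (t * Real.exp u) u :=
        (Real.hasDerivAt_exp u).const_mul t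
      exact hn.div (hgd u) (hg u).ne'
    have halg : ∀ a G : ℝ, G ≠ 0 → a / G * (1 - a / G) = (a * G - a * a) / G ^ 2 := by
      intro a G hG; field_simp
    refine (h1.sub h2).congr_deriv ?_
    rw [halg (t * Real.exp u) (g u) (hg u).ne']
  have hφ'nonneg : ∀ u, (0:ℝ) ≤ 1/4 - (t * Real.exp u / g u) * (1 - t * Real.exp u / g u) := by
    intro u
    have := vquarter (t * Real.exp u / g u)
    linarith
  have hmono : Monotone φ' :=
    monotone_of_hasDerivAt_nonneg hφ'd (fun u => hφ'nonneg u)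
  have hφ'0 : φ' 0 = 0 := by
    simp only [hφ'_def, hg_def]
    simp [Real.exp_zero]
  have hφ0 : φ 0 = 0 := by
    simp only [hφ_def, hg_def]
    norm_num
  have hkey : 0 ≤ φ u := by
    rcases le_total 0 u with hu | hu
    · have hmonoOn : MonotoneOn φ (Set.Ici 0) := by
        apply monotoneOn_of_hasDerivWithinAt_nonneg (convex_Ici 0)
          (fun x _ => (hφd x).continuousAt.continuousWithinAt)
          (fun x hx => (hφd x).hasDerivWithinAt)
        intro x hx
        rw [interior_Ici] at hx
        have : φ' 0 ≤ φ' x := hmono (le_of_lt hx)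
        linarith [hφ'0 ▸ this]
      have := hmonoOn (Set.self_mem_Ici) (Set.mem_Ici.mpr hu) hu
      linarith [hφ0 ▸ this]
    · have hantOn : AntitoneOn φ (Set.Iic 0) := by
        apply antitoneOn_of_hasDerivWithinAt_nonpos (convex_Iic 0)
          (fun x _ => (hφd x).continuousAt.continuousWithinAt)
          (fun x hx => (hφd x).hasDerivWithinAt)
        intro x hx
        rw [interior_Iic] at hx
        have : φ' x ≤ φ' 0 := hmono (le_of_lt hx)
        linarith [hφ'0 ▸ this]
      have := hantOn (Set.mem_Iic.mpr hu) (Set.self_mem_Iic) hu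
      linarith [hφ0 ▸ this]
  simp only [hφ_def] at hkey
  linarith

lemma hoeff_one' {t : ℝ} (ht0 : 0 ≤ t) (ht1 : t ≤ 1) (u : ℝ) :
    1 - t + t * Real.exp u ≤ Real.exp (t * u + u ^ 2 / 8) := by
  calc 1 - t + t * Real.exp u
      = Real.exp (Real.log (1 - t + t * Real.exp u)) :=
        (Real.exp_log (gpos ht0 ht1 u)).symm
    _ ≤ _ := Real.exp_le_exp.mpr (hoeff_one ht0 ht1 u)

/-- The Dirac mass on expert `j`, viewed as a convex weight vector. -/
noncomputable def dirac {N : ℕ} (j : Fin N) : Fin N → ℝ := fun i => if i = j then 1 else 0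

lemma dirac_mem_stdSimplex {N : ℕ} (j : Fin N) : dirac j ∈ stdSimplex ℝ (Fin N) := by
  constructor
  · intro i
    unfold dirac
    split <;> norm_num
  · unfold dirac
    simp

/-- Regret bound for the specialist (sleeping-experts) aggregation rule `S_η`:
under convex losses with `ℓ_t(δ_i) ∈ [0, L]` for active experts, for every expert `j`,
`R_T(S_η, j) ≤ (ln N)/η + (η/8) L² T`. -/
theorem specialist_regret_bound
    (N T : ℕ) (hN : 0 < N) (η L : ℝ) (hη : 0 < η) (hL : 0 ≤ L)
    (E : ℕ → Finset (Fin N)) (hE : ∀ t, (E t).Nonempty)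
    (ℓ : ℕ → (Fin N → ℝ) → ℝ)
    (hconv : ∀ t, ConvexOn ℝ (stdSimplex ℝ (Fin N)) (ℓ t))
    (hbound : ∀ t ∈ Finset.Icc 1 T, ∀ i ∈ E t, ℓ t (dirac i) ∈ Set.Icc (0 : ℝ) L)
    (w : ℕ → Fin N → ℝ)
    (hw1 : ∀ i, w 1 i = 1 / N)
    (hupd : ∀ t, ∀ i ∈ E t, w (t + 1) i =
      w t i * Real.exp (-η * ℓ t (dirac i)) * (∑ j ∈ E t, w t j) /
        (∑ k ∈ E t, w t k * Real.exp (-η * ℓ t (dirac k))))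
    (hupd' : ∀ t, ∀ i, i ∉ E t → w (t + 1) i = w t i)
    (p : ℕ → Fin N → ℝ)
    (hp : ∀ t i, p t i = (if i ∈ E t then w t i else 0) / ∑ j ∈ E t, w t j) :
    ∀ j : Fin N,
      ∑ t ∈ Finset.Icc 1 T, (if j ∈ E t then ℓ t (p t) - ℓ t (dirac j) else 0)
        ≤ Real.log N / η + η / 8 * L ^ 2 * T := by
  have hNR : (0:ℝ) < N := by exact_mod_cast hN
  -- positivity of weights
  have hpos0 : ∀ n, ∀ i, 0 < w (n + 1) i := by
    intro n
    induction n with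
    | zero => intro i; rw [hw1]; positivity
    | succ n ih =>
      intro i
      by_cases hi : i ∈ E (n + 1)
      · rw [hupd (n + 1) i hi]
        have hS : 0 < ∑ j ∈ E (n + 1), w (n + 1) j :=
          Finset.sum_pos (fun j _ => ih j) (hE (n + 1))
        have hS' : 0 < ∑ k ∈ E (n + 1), w (n + 1) k * Real.exp (-η * ℓ (n + 1) (dirac k)) :=
          Finset.sum_pos (fun k _ => mul_pos (ih k) (Real.exp_pos _)) (hE (n + 1))
        exact div_pos (mul_pos (mul_pos (ih i) (Real.exp_pos _)) hS) hS'
      · rw [hupd' (n + 1) i hi]; exact ih i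
  have hpos : ∀ t, 1 ≤ t → ∀ i, 0 < w t i := by
    intro t ht i
    obtain ⟨s, rfl⟩ := Nat.exists_eq_add_of_le ht
    rw [Nat.add_comm]
    exact hpos0 s i
  -- total weight is 1
  have hsum0 : ∀ n, ∑ i, w (n + 1) i = 1 := by
    intro n
    induction n with
    | zero =>
      simp only [hw1]
      rw [Finset.sum_const, Finset.card_univ, Fintype.card_fin]
      rw [nsmul_eq_mul]; field_simp
    | succ n ih =>
      have hS : 0 < ∑ j ∈ E (n + 1), w (n + 1) j :=
        Finset.sum_pos (fun j _ => hpos0 n j) (hE (n + 1))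
      have hS' : 0 < ∑ k ∈ E (n + 1), w (n + 1) k * Real.exp (-η * ℓ (n + 1) (dirac k)) :=
        Finset.sum_pos (fun k _ => mul_pos (hpos0 n k) (Real.exp_pos _)) (hE (n + 1))
      have h1 : ∑ i ∈ E (n + 1), w (n + 2) i = ∑ i ∈ E (n + 1), w (n + 1) i := by
        rw [Finset.sum_congr rfl (fun i hi => hupd (n + 1) i hi)]
        rw [← Finset.sum_div, ← Finset.sum_mul]
        exact mul_div_cancel_left₀ _ hS'.ne'
      have h2 : ∑ i ∈ (E (n + 1))ᶜ, w (n + 2) i = ∑ i ∈ (E (n + 1))ᶜ, w (n + 1) i :=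
        Finset.sum_congr rfl (fun i hi => hupd' (n + 1) i (Finset.mem_compl.mp hi))
      calc ∑ i, w (n + 2) i
          = ∑ i ∈ E (n + 1), w (n + 2) i + ∑ i ∈ (E (n + 1))ᶜ, w (n + 2) i :=
            (Finset.sum_add_sum_compl _ _).symm
        _ = ∑ i ∈ E (n + 1), w (n + 1) i + ∑ i ∈ (E (n + 1))ᶜ, w (n + 1) i := by rw [h1, h2]
        _ = ∑ i, w (n + 1) i := Finset.sum_add_sum_compl _ _
        _ = 1 := ih
  intro j
  -- per-round bound
  have hstep : ∀ t ∈ Finset.Icc 1 T,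
      (if j ∈ E t then ℓ t (p t) - ℓ t (dirac j) else 0)
        ≤ (Real.log (w (t + 1) j) - Real.log (w t j)) / η + η / 8 * L ^ 2 := by
    intro t ht
    obtain ⟨ht1, htT⟩ := Finset.mem_Icc.mp ht
    have hwt : ∀ i, 0 < w t i := hpos t ht1
    by_cases hj : j ∈ E t
    swap
    · rw [if_neg hj, hupd' t j hj]
      have := sq_nonneg L
      have h8 : 0 ≤ η / 8 * L ^ 2 := by positivity
      simp only [sub_self, zero_div, zero_add]
      exact h8
    rw [if_pos hj]
    set S := ∑ k ∈ E t, w t k with hS_def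
    set S' := ∑ k ∈ E t, w t k * Real.exp (-η * ℓ t (dirac k)) with hS'_def
    have hS : 0 < S := Finset.sum_pos (fun k _ => hwt k) (hE t)
    have hS' : 0 < S' := Finset.sum_pos (fun k _ => mul_pos (hwt k) (Real.exp_pos _)) (hE t)
    set m := ∑ i ∈ E t, w t i / S * ℓ t (dirac i) with hm_def
    have hq0 : ∀ i ∈ E t, 0 ≤ w t i / S := fun i _ => le_of_lt (div_pos (hwt i) hS)
    have hq1 : ∑ i ∈ E t, w t i / S = 1 := by
      rw [← Finset.sum_div, ← hS_def]
      field_simp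
    have hx : ∀ i ∈ E t, ℓ t (dirac i) ∈ Set.Icc (0:ℝ) L := hbound t ht
    -- Jensen
    have hpt : p t = ∑ i ∈ E t, (w t i / S) • dirac i := by
      funext k
      rw [hp t k, Finset.sum_apply]
      simp only [Pi.smul_apply, dirac, smul_eq_mul, mul_ite, mul_one, mul_zero]
      rw [Finset.sum_ite_eq (E t) k (fun i => w t i / S)]
      by_cases hk : k ∈ E t <;> simp [hk, hS_def]
    have hJ : ℓ t (p t) ≤ m := by
      rw [hpt, hm_def]
      have := (hconv t).map_sum_le hq0 hq1 (fun i _ => dirac_mem_stdSimplex i)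
      simpa using this
    -- key exponential inequality
    have hkey : S' ≤ S * Real.exp (-η * m + η ^ 2 * L ^ 2 / 8) := by
      by_cases hL0 : L = 0
      · subst hL0
        have hx0 : ∀ i ∈ E t, ℓ t (dirac i) = 0 := fun i hi =>
          le_antisymm (hx i hi).2 (hx i hi).1
        have hm0 : m = 0 := by
          rw [hm_def]
          exact Finset.sum_eq_zero (fun i hi => by rw [hx0 i hi, mul_zero])
        have hSeq : S' = S := by
          rw [hS'_def, hS_def]
          exact Finset.sum_congr rfl (fun k hk => by rw [hx0 k hk]; simp)
        have hz : -η * m + η ^ 2 * (0:ℝ) ^ 2 / 8 = 0 := by rw [hm0]; ring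
        rw [hSeq, hz, Real.exp_zero, mul_one]
      · have hLpos : 0 < L := lt_of_le_of_ne hL (Ne.symm hL0)
        have hmS : ∑ i ∈ E t, w t i * ℓ t (dirac i) = S * m := by
          rw [hm_def, Finset.mul_sum]
          refine Finset.sum_congr rfl (fun i _ => ?_)
          field_simp
        have hm0 : 0 ≤ m :=
          Finset.sum_nonneg (fun i hi => mul_nonneg (hq0 i hi) (hx i hi).1)
        have hmL : m ≤ L := by
          calc m ≤ ∑ i ∈ E t, w t i / S * L :=
                Finset.sum_le_sum (fun i hi =>
                  mul_le_mul_of_nonneg_left (hx i hi).2 (hq0 i hi))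
            _ = L := by rw [← Finset.sum_mul, hq1, one_mul]
        -- pointwise convexity of exp
        have hpw : ∀ i ∈ E t, Real.exp (-η * ℓ t (dirac i)) ≤
            (1 - ℓ t (dirac i) / L) + ℓ t (dirac i) / L * Real.exp (-η * L) := by
          intro i hi
          set x := ℓ t (dirac i) with hx_def
          have hx0 : 0 ≤ x := (hx i hi).1
          have hxL : x ≤ L := (hx i hi).2
          have hθ0 : 0 ≤ x / L := div_nonneg hx0 hL
          have hθ1 : x / L ≤ 1 := (div_le_one hLpos).mpr hxL
          have := convexOn_exp.2 (Set.mem_univ (0:ℝ)) (Set.mem_univ (-η * L))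
            (by linarith : (0:ℝ) ≤ 1 - x / L) hθ0 (by ring)
          have harg : (1 - x / L) • (0:ℝ) + (x / L) • (-η * L) = -η * x := by
            simp only [smul_eq_mul]
            field_simp
            ring
          rw [harg] at this
          simpa [Real.exp_zero, smul_eq_mul] using this
        have h1 : S' ≤ S - S * m / L + S * m / L * Real.exp (-η * L) := by
          calc S' ≤ ∑ i ∈ E t, w t i *
              ((1 - ℓ t (dirac i) / L) + ℓ t (dirac i) / L * Real.exp (-η * L)) :=
                Finset.sum_le_sum (fun i hi =>
                  mul_le_mul_of_nonneg_left (hpw i hi) (hwt i).le)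
            _ = ∑ i ∈ E t, (w t i - w t i * ℓ t (dirac i) / L +
                w t i * ℓ t (dirac i) / L * Real.exp (-η * L)) := by
                refine Finset.sum_congr rfl (fun i _ => ?_)
                field_simp
            _ = (∑ i ∈ E t, w t i) - (∑ i ∈ E t, w t i * ℓ t (dirac i)) / L +
                (∑ i ∈ E t, w t i * ℓ t (dirac i)) / L * Real.exp (-η * L) := by
                rw [Finset.sum_add_distrib, Finset.sum_sub_distrib, ← Finset.sum_mul,
                  ← Finset.sum_div]
            _ = S - S * m / L + S * m / L * Real.exp (-η * L) := by
                rw [hmS, ← hS_def]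
        have h2 : 1 - m / L + m / L * Real.exp (-η * L) ≤
            Real.exp (m / L * (-η * L) + (-η * L) ^ 2 / 8) :=
          hoeff_one' (div_nonneg hm0 hL) ((div_le_one hLpos).mpr hmL) (-η * L)
        have h3 : m / L * (-η * L) + (-η * L) ^ 2 / 8 = -η * m + η ^ 2 * L ^ 2 / 8 := by
          field_simp
        rw [h3] at h2
        calc S' ≤ S - S * m / L + S * m / L * Real.exp (-η * L) := h1
          _ = S * (1 - m / L + m / L * Real.exp (-η * L)) := by ring
          _ ≤ S * Real.exp (-η * m + η ^ 2 * L ^ 2 / 8) :=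
              mul_le_mul_of_nonneg_left h2 hS.le
    -- take logs
    have hlogS' : Real.log S' ≤ Real.log S + (-η * m + η ^ 2 * L ^ 2 / 8) := by
      calc Real.log S' ≤ Real.log (S * Real.exp (-η * m + η ^ 2 * L ^ 2 / 8)) :=
            Real.log_le_log hS' hkey
        _ = Real.log S + (-η * m + η ^ 2 * L ^ 2 / 8) := by
            rw [Real.log_mul hS.ne' (Real.exp_pos _).ne', Real.log_exp]
    have hlogw : Real.log (w (t + 1) j) =
        Real.log (w t j) + (-η * ℓ t (dirac j)) + Real.log S - Real.log S' := by
      rw [hupd t j hj, ← hS_def, ← hS'_def]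
      rw [Real.log_div (mul_pos (mul_pos (hwt j) (Real.exp_pos _)) hS).ne' hS'.ne']
      rw [Real.log_mul (mul_pos (hwt j) (Real.exp_pos _)).ne' hS.ne']
      rw [Real.log_mul (hwt j).ne' (Real.exp_pos _).ne', Real.log_exp]
    have h4 : -η * ℓ t (dirac j) + η * m - η ^ 2 * L ^ 2 / 8 ≤
        Real.log (w (t + 1) j) - Real.log (w t j) := by
      rw [hlogw]; linarith
    have h5 : m - ℓ t (dirac j) - η / 8 * L ^ 2 ≤
        (Real.log (w (t + 1) j) - Real.log (w t j)) / η := by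
      rw [le_div_iff₀ hη]
      nlinarith [h4]
    linarith
  -- sum up
  have hsum_le : ∑ t ∈ Finset.Icc 1 T, (if j ∈ E t then ℓ t (p t) - ℓ t (dirac j) else 0)
      ≤ ∑ t ∈ Finset.Icc 1 T,
        ((Real.log (w (t + 1) j) - Real.log (w t j)) / η + η / 8 * L ^ 2) :=
    Finset.sum_le_sum hstep
  have htel : ∑ t ∈ Finset.Icc 1 T, (Real.log (w (t + 1) j) - Real.log (w t j))
      = Real.log (w (T + 1) j) - Real.log (w 1 j) := by
    rw [← Finset.Ico_add_one_right_eq_Icc, Finset.sum_Ico_eq_sum_range]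
    simp only [Nat.add_sub_cancel]
    have := Finset.sum_range_sub (fun i => Real.log (w (i + 1) j)) T
    rw [← this]
    refine Finset.sum_congr rfl (fun i _ => ?_)
    have h1i : 1 + i = i + 1 := Nat.add_comm 1 i
    rw [h1i]
  have hrw : ∑ t ∈ Finset.Icc 1 T,
      ((Real.log (w (t + 1) j) - Real.log (w t j)) / η + η / 8 * L ^ 2)
      = (Real.log (w (T + 1) j) - Real.log (w 1 j)) / η + η / 8 * L ^ 2 * T := by
    rw [Finset.sum_add_distrib, ← Finset.sum_div, htel, Finset.sum_const, Nat.card_Icc]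
    simp only [Nat.add_sub_cancel, nsmul_eq_mul]
    ring
  have hw1j : Real.log (w 1 j) = -Real.log N := by
    rw [hw1 j, one_div, Real.log_inv]
  have hwT : w (T + 1) j ≤ 1 := by
    have h := hsum0 T
    have := Finset.single_le_sum (f := fun i => w (T + 1) i)
      (fun i _ => (hpos0 T i).le) (Finset.mem_univ j)
    linarith
  have hlogT : Real.log (w (T + 1) j) ≤ 0 := Real.log_nonpos (hpos0 T j).le hwT
  calc ∑ t ∈ Finset.Icc 1 T, (if j ∈ E t then ℓ t (p t) - ℓ t (dirac j) else 0)
      ≤ (Real.log (w (T + 1) j) - Real.log (w 1 j)) / η + η / 8 * L ^ 2 * T := by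
        rw [← hrw]; exact hsum_le
    _ ≤ Real.log N / η + η / 8 * L ^ 2 * T := by
        have : Real.log (w (T + 1) j) - Real.log (w 1 j) ≤ Real.log N := by
          rw [hw1j]; linarith
        have h2 : (Real.log (w (T + 1) j) - Real.log (w 1 j)) / η ≤ Real.log N / η := by
          gcongr
        linarith
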